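/- If v ∈ ℝⁿ is a zero-sum vector and R is a stochastic irreducible matrix, then the series Hv = (1/2) Σ_{k≥0} ((I + R')/2)ᵏ v converges and its limit satisfies Hv = R'(Hv) + v. -/

import Mathlib

open Matrix Finset

lemma dob {n : ℕ} (M : Matrix (Fin n) (Fin n) ℝ) (δ : ℝ)
    (hM : ∀ i j, δ ≤ M i j) (hrowM : ∀ i, ∑ j, M i j = 1)
    (w : Fin n → ℝ) (hw : ∑ i, w i = 0) :
    ∑ j, |(w ᵥ* M) j| ≤ (1 - n * δ) * ∑ i, |w i| := by
  calc ∑ j, |(w ᵥ* M) j| ≤ ∑ j, ∑ i, |w i| * (M i j - δ) := by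
        refine Finset.sum_le_sum fun j _ => ?_
        have h1 : (w ᵥ* M) j = ∑ i, w i * (M i j - δ) := by
          simp only [Matrix.vecMul, dotProduct, mul_sub,
            Finset.sum_sub_distrib, ← Finset.sum_mul, hw]
          ring
        rw [h1]
        refine (Finset.abs_sum_le_sum_abs _ _).trans ?_
        refine Finset.sum_le_sum fun i _ => ?_
        rw [abs_mul, abs_of_nonneg (show (0:ℝ) ≤ M i j - δ by linarith [hM i j])]
    _ = ∑ i, |w i| * (1 - n * δ) := by
        rw [Finset.sum_comm]
        refine Finset.sum_congr rfl fun i _ => ?_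
        rw [← Finset.mul_sum, Finset.sum_sub_distrib, hrowM i, Finset.sum_const,
          Finset.card_univ]
        simp [nsmul_eq_mul]
    _ = (1 - n * δ) * ∑ i, |w i| := by rw [← Finset.sum_mul, mul_comm]

open Matrix Finset

lemma pow_nonneg_rowsum {n : ℕ} (A : Matrix (Fin n) (Fin n) ℝ)
    (hA : ∀ i j, 0 ≤ A i j) (hrowA : ∀ i, ∑ j, A i j = 1) (k : ℕ) :
    (∀ i j, 0 ≤ (A ^ k) i j) ∧ (∀ i, ∑ j, (A ^ k) i j = 1) := by
  induction k with
  | zero =>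
    constructor
    · intro i j; simp [Matrix.one_apply]; positivity
    · intro i; simp [Matrix.one_apply]
  | succ k ih =>
    rw [pow_succ]
    constructor
    · intro i j
      rw [Matrix.mul_apply]
      exact Finset.sum_nonneg fun m _ => mul_nonneg (ih.1 i m) (hA m j)
    · intro i
      simp only [Matrix.mul_apply]
      rw [Finset.sum_comm]
      calc ∑ m, ∑ j, (A ^ k) i m * A m j
          = ∑ m, (A ^ k) i m * ∑ j, A m j := by
            simp [Finset.mul_sum]
        _ = 1 := by simp [hrowA, ih.2 i]

lemma posn {n : ℕ} (hn : 0 < n) (A : Matrix (Fin n) (Fin n) ℝ)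
    (hA : ∀ i j, 0 ≤ A i j) (hrowA : ∀ i, ∑ j, A i j = 1)
    (hdiag : ∀ i, 0 < A i i)
    (hconn : ∀ S : Finset (Fin n), S.Nonempty → S ≠ Finset.univ →
      ∃ i ∈ S, ∃ j ∉ S, 0 < A i j)
    (i j : Fin n) : 0 < (A ^ n) i j := by
  set S : ℕ → Finset (Fin n) := fun k => Finset.univ.filter (fun j => 0 < (A ^ k) i j) with hS
  have hmemS : ∀ k j', j' ∈ S k ↔ 0 < (A ^ k) i j' := by
    intro k j'; simp [hS]
  have hsub : ∀ k, S k ⊆ S (k + 1) := by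
    intro k j' hj'
    rw [hmemS] at hj' ⊢
    rw [pow_succ, Matrix.mul_apply]
    refine Finset.sum_pos' (fun m _ => mul_nonneg ((pow_nonneg_rowsum A hA hrowA k).1 i m) (hA m j')) ?_
    exact ⟨j', Finset.mem_univ _, mul_pos hj' (hdiag j')⟩
  have hgrow : ∀ k, S k ≠ Finset.univ → S k ≠ ∅ → (S k).card + 1 ≤ (S (k+1)).card := by
    intro k hne hne0
    obtain ⟨i', hi', j', hj', hpos⟩ := hconn (S k) (Finset.nonempty_of_ne_empty hne0) hne
    have hj'new : j' ∈ S (k + 1) := by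
      rw [hmemS]
      rw [pow_succ, Matrix.mul_apply]
      refine Finset.sum_pos' (fun m _ => mul_nonneg ((pow_nonneg_rowsum A hA hrowA k).1 i m) (hA m j')) ?_
      exact ⟨i', Finset.mem_univ _, mul_pos ((hmemS k i').1 hi') hpos⟩
    calc (S k).card + 1 = (insert j' (S k)).card := (Finset.card_insert_of_notMem hj').symm
      _ ≤ (S (k+1)).card := Finset.card_le_card (Finset.insert_subset hj'new (hsub k))
  have key : ∀ m : ℕ, S (m + 1) = Finset.univ ∨ m + 1 ≤ (S (m + 1)).card := by
    intro m
    induction m with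
    | zero =>
      right
      refine Finset.one_le_card.2 ⟨i, ?_⟩
      rw [hmemS, pow_one]; exact hdiag i
    | succ m ih =>
      rcases ih with h | h
      · left
        exact Finset.eq_univ_of_forall fun x => hsub (m+1) (h ▸ Finset.mem_univ x)
      · by_cases hu : S (m + 1) = Finset.univ
        · left
          exact Finset.eq_univ_of_forall fun x => hsub (m+1) (hu ▸ Finset.mem_univ x)
        · right
          have hne0 : S (m+1) ≠ ∅ := by
            intro h0; rw [h0] at h; simp at h
          have := hgrow (m+1) hu hne0
          omega
  have hSn : S n = Finset.univ := by
    obtain ⟨m, rfl⟩ : ∃ m, n = m + 1 := ⟨n - 1, by omega⟩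
    rcases key m with h | h
    · exact h
    · apply Finset.eq_univ_of_card
      have hle : (S (m+1)).card ≤ Fintype.card (Fin (m+1)) := Finset.card_le_univ _
      simp only [Fintype.card_fin] at hle ⊢
      omega
  exact (hmemS n j).1 (hSn ▸ Finset.mem_univ j)

/-- For a zero-sum v and stochastic irreducible R, the series
Hv = (1/2) Σ_{k≥0} ((I+R')/2)ᵏ v converges and its limit satisfies
Hv = R'(Hv) + v. -/
theorem stmt14 {n : ℕ} (R : Matrix (Fin n) (Fin n) ℝ)
    (hR : ∀ i j, 0 ≤ R i j) (hrow : ∀ i, ∑ j, R i j = 1)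
    (hirr : ∀ S : Finset (Fin n), S.Nonempty → S ≠ Finset.univ →
      ∃ i ∈ S, ∑ j ∈ S, R i j < 1)
    (v : Fin n → ℝ) (hv : ∑ i, v i = 0) :
    ∃ Hv : Fin n → ℝ,
      HasSum (fun k : ℕ =>
        (2⁻¹ : ℝ) • ((((2⁻¹ : ℝ) • (1 + Rᵀ)) ^ k).mulVec v)) Hv ∧
      Hv = Rᵀ.mulVec Hv + v := by
  rcases Nat.eq_zero_or_pos n with hn | hn
  · subst hn
    refine ⟨0, ?_, ?_⟩
    · have hf : (fun k : ℕ =>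
          (2⁻¹ : ℝ) • ((((2⁻¹ : ℝ) • (1 + Rᵀ)) ^ k).mulVec v)) = fun _ => (0 : Fin 0 → ℝ) :=
        funext fun k => funext fun i => i.elim0
      rw [hf]; exact hasSum_zero
    · funext i; exact i.elim0
  -- setup
  set A : Matrix (Fin n) (Fin n) ℝ := (2⁻¹ : ℝ) • (1 + R) with hAdef
  have hA : ∀ i j, 0 ≤ A i j := by
    intro i j
    simp only [hAdef, Matrix.smul_apply, Matrix.add_apply, Matrix.one_apply, smul_eq_mul]
    have := hR i j
    split <;> nlinarith
  have hrowA : ∀ i, ∑ j, A i j = 1 := by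
    intro i
    simp only [hAdef, Matrix.smul_apply, Matrix.add_apply, smul_eq_mul, ← Finset.mul_sum,
      Finset.sum_add_distrib, hrow i, Matrix.one_apply, Finset.sum_ite_eq, Finset.mem_univ]
    norm_num
  have hdiag : ∀ i, 0 < A i i := by
    intro i
    simp only [hAdef, Matrix.smul_apply, Matrix.add_apply, Matrix.one_apply_eq, smul_eq_mul]
    have := hR i i; nlinarith
  have hconn : ∀ S : Finset (Fin n), S.Nonempty → S ≠ Finset.univ →
      ∃ i ∈ S, ∃ j ∉ S, 0 < A i j := by
    intro S hS1 hS2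
    obtain ⟨i, hi, hsum⟩ := hirr S hS1 hS2
    have : ∃ j ∉ S, 0 < R i j := by
      by_contra h
      push_neg at h
      have hc : ∑ j ∈ Sᶜ, R i j = 0 := by
        refine Finset.sum_eq_zero fun j hj => ?_
        have := h j (Finset.mem_compl.1 hj)
        have := hR i j
        linarith
      have := Finset.sum_add_sum_compl S (R i)
      rw [hc, hrow i] at this
      linarith
    obtain ⟨j, hj, hRij⟩ := this
    refine ⟨i, hi, j, hj, ?_⟩
    have hij : i ≠ j := fun h => hj (h ▸ hi)
    have := hA i j
    simp only [hAdef, Matrix.smul_apply, Matrix.add_apply, Matrix.one_apply_ne hij, smul_eq_mul]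
    nlinarith
  -- powers
  have hpow := pow_nonneg_rowsum A hA hrowA
  -- the vectors
  set w : ℕ → Fin n → ℝ := fun k => v ᵥ* (A ^ k) with hwdef
  set f : ℕ → ℝ := fun k => ∑ j, |w k j| with hfdef
  have hf0 : ∀ k, 0 ≤ f k := fun k => Finset.sum_nonneg fun j _ => abs_nonneg _
  have hw0 : ∀ k, ∑ i, w k i = 0 := by
    intro k
    simp only [hwdef, Matrix.vecMul, dotProduct]
    rw [Finset.sum_comm]
    calc ∑ i, ∑ j, v i * (A ^ k) i j = ∑ i, v i * ∑ j, (A ^ k) i j := by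
          simp [Finset.mul_sum]
      _ = 0 := by simp [(hpow k).2, hv]
  have hwsucc : ∀ k m, w (k + m) = w k ᵥ* (A ^ m) := by
    intro k m
    simp only [hwdef, Matrix.vecMul_vecMul, ← pow_add]
  have hdec : ∀ k, f (k + 1) ≤ f k := by
    intro k
    have := dob (A ^ 1) 0 (by simpa using fun i j => (hpow 1).1 i j) (hpow 1).2 (w k) (hw0 k)
    rw [← hwsucc k 1] at this
    simpa using this
  have hfle : ∀ k, f k ≤ f 0 := by
    intro k
    induction k with
    | zero => exact le_rfl
    | succ k ih => exact (hdec k).trans ih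
  -- contraction constant
  obtain ⟨p0, _, hmin⟩ := Finset.exists_min_image (Finset.univ : Finset (Fin n × Fin n))
    (fun p => (A ^ n) p.1 p.2) ⟨(⟨0, hn⟩, ⟨0, hn⟩), Finset.mem_univ _⟩
  set δ : ℝ := (A ^ n) p0.1 p0.2 with hδdef
  have hδpos : 0 < δ := posn hn A hA hrowA hdiag hconn p0.1 p0.2
  have hδle : ∀ i j, δ ≤ (A ^ n) i j := fun i j => hmin (i, j) (Finset.mem_univ _)
  have hnδ : (n : ℝ) * δ ≤ 1 := by
    have h1 : ∑ j, δ ≤ ∑ j, (A ^ n) p0.1 j := Finset.sum_le_sum fun j _ => hδle p0.1 j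
    rw [(hpow n).2 p0.1, Finset.sum_const, Finset.card_univ, Fintype.card_fin,
      nsmul_eq_mul] at h1
    exact h1
  set r : ℝ := max (1 - n * δ) 2⁻¹ with hrdef
  have hr0 : 0 < r := lt_max_of_lt_right (by norm_num)
  have hr1 : r < 1 := by
    apply max_lt
    · have : (0 : ℝ) < n * δ := by positivity
      linarith
    · norm_num
  have hcontr : ∀ k, f (k + n) ≤ r * f k := by
    intro k
    have := dob (A ^ n) δ hδle (hpow n).2 (w k) (hw0 k)
    rw [← hwsucc k n] at this
    calc f (k + n) ≤ (1 - n * δ) * f k := this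
      _ ≤ r * f k := mul_le_mul_of_nonneg_right (le_max_left _ _) (hf0 k)
  -- geometric bound
  set t : ℝ := r ^ ((n : ℝ)⁻¹) with htdef
  have ht0 : 0 < t := Real.rpow_pos_of_pos hr0 _
  have ht1 : t < 1 := Real.rpow_lt_one hr0.le hr1 (by positivity)
  have htn : t ^ n = r := by
    rw [htdef, ← Real.rpow_natCast (r ^ ((n:ℝ)⁻¹)) n, ← Real.rpow_mul hr0.le,
      inv_mul_cancel₀ (by exact_mod_cast hn.ne'), Real.rpow_one]
  set B : ℝ := f 0 / t ^ n with hBdef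
  have hbound : ∀ k, f k ≤ B * t ^ k := by
    intro k
    induction k using Nat.strong_induction_on with
    | _ k ih =>
      by_cases hk : k < n
      · have h1 : f k ≤ f 0 := hfle k
        have h2 : t ^ n ≤ t ^ k := pow_le_pow_of_le_one ht0.le ht1.le hk.le
        have h3 : f 0 * t ^ n ≤ f 0 * t ^ k := mul_le_mul_of_nonneg_left h2 (hf0 0)
        have h4 : f 0 ≤ B * t ^ k := by
          rw [hBdef, div_mul_eq_mul_div, le_div_iff₀ (by positivity)]
          linarith
        linarith
      · push_neg at hk
        have hkn : k - n < k := by omega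
        have h1 : f k = f ((k - n) + n) := by congr 1; omega
        have h2 : f ((k - n) + n) ≤ r * f (k - n) := hcontr (k - n)
        have h3 : r * f (k - n) ≤ r * (B * t ^ (k - n)) :=
          mul_le_mul_of_nonneg_left (ih (k - n) hkn) hr0.le
        have h4 : r * (B * t ^ (k - n)) = B * t ^ k := by
          rw [← htn, ← mul_assoc, mul_comm (t ^ n) B, mul_assoc, ← pow_add]
          congr 2
          omega
        linarith
  -- summability
  have hsummable : Summable w := by
    refine Summable.of_norm_bounded
      ((summable_geometric_of_lt_one ht0.le ht1).mul_left B) fun k => ?_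
    refine le_trans ?_ (hbound k)
    rw [pi_norm_le_iff_of_nonneg (hf0 k)]
    intro j
    rw [Real.norm_eq_abs]
    exact Finset.single_le_sum (fun i _ => abs_nonneg (w k i)) (Finset.mem_univ j)
  set S : Fin n → ℝ := ∑' k, w k with hSdef
  have hS : HasSum w S := hsummable.hasSum
  -- rewrite the statement's summand
  have hQ : ((2⁻¹ : ℝ) • (1 + Rᵀ)) = Aᵀ := by
    rw [hAdef, Matrix.transpose_smul, Matrix.transpose_add, Matrix.transpose_one]
  have hsummand : (fun k : ℕ => (2⁻¹ : ℝ) • ((((2⁻¹ : ℝ) • (1 + Rᵀ)) ^ k).mulVec v))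
      = fun k => (2⁻¹ : ℝ) • w k := by
    funext k
    rw [hQ, ← Matrix.transpose_pow, Matrix.mulVec_transpose]
  refine ⟨(2⁻¹ : ℝ) • S, ?_, ?_⟩
  · rw [hsummand]
    exact hS.const_smul _
  -- fixed point equation
  · have hmap : HasSum (fun k => w (k + 1)) (S ᵥ* A) := by
      have hL := hS.mapL (Matrix.vecMulLinear A).toContinuousLinearMap
      have : ∀ x : Fin n → ℝ, (Matrix.vecMulLinear A).toContinuousLinearMap x = x ᵥ* A := by
        intro x
        simp [Matrix.vecMulLinear]
      simp only [this] at hL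
      refine (congrArg (fun g => HasSum g (S ᵥ* A)) (?_ : (fun k => w (k + 1)) = fun b => w b ᵥ* A)).mpr hL
      funext k
      rw [hwsucc k 1, pow_one]
    have hshift : HasSum (fun k => w (k + 1)) (S - v) := by
      have := (hasSum_nat_add_iff' 1).2 hS
      simpa [hwdef] using this
    have hAS : S ᵥ* A = S - v := hmap.unique hshift
    have h2 : S ᵥ* A = (2⁻¹ : ℝ) • (S + S ᵥ* R) := by
      funext j
      simp only [hAdef, Matrix.vecMul, dotProduct, Matrix.smul_apply,
        Matrix.add_apply, smul_eq_mul, Pi.smul_apply, Pi.add_apply, mul_add,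
        Finset.sum_add_distrib, Finset.mul_sum]
      congr 1
      · simp [Matrix.one_apply, Finset.sum_ite_eq', mul_comm]
      · exact Finset.sum_congr rfl fun x _ => by ring
    rw [h2] at hAS
    rw [Matrix.mulVec_transpose, Matrix.smul_vecMul]
    funext i
    have h3 := congrFun hAS i
    simp only [Pi.smul_apply, Pi.add_apply, Pi.sub_apply, smul_eq_mul] at h3 ⊢
    linarith
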